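/- Let m, n be natural numbers, let Γ, Γ̄ be m×n complex matrices, and let Ω, Ω̄ be m×m positive definite complex matrices. Then log(det(I + Ω⁻¹ Γ Γᴴ)) ≥ log(det(I + Ω̄⁻¹ Γ̄ Γ̄ᴴ)) − Re Tr(Ω̄⁻¹ Γ̄ Γ̄ᴴ) + 2 Re Tr(Ω̄⁻¹ Γ̄ Γᴴ) − Re Tr( (Ω̄⁻¹ − (Γ̄ Γ̄ᴴ + Ω̄)⁻¹)ᴴ (Γ Γᴴ + Ω) ), where det(I + Ω⁻¹ΓΓᴴ) and det(I + Ω̄⁻¹Γ̄Γ̄ᴴ) are positive real numbers (equal to det(Ω + ΓΓᴴ)/det(Ω) and det(Ω̄ + Γ̄Γ̄ᴴ)/det(Ω̄), respectively) and log is taken of their real parts. -/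

import Mathlib

open Matrix ComplexOrder
variable {k : Type*} [Fintype k] [DecidableEq k]

lemma trace_eq_sum_eig {A : Matrix k k ℂ} (hA : A.IsHermitian) :
    A.trace = ∑ i, (hA.eigenvalues i : ℂ) := by
  have hU := (hA.eigenvectorUnitary).2
  rw [Unitary.mem_iff] at hU
  conv_lhs => rw [hA.spectral_theorem]
  rw [Unitary.conjStarAlgAut_apply]
  rw [Matrix.trace_mul_cycle]
  show Matrix.trace (star (hA.eigenvectorUnitary : Matrix k k ℂ) *
    (hA.eigenvectorUnitary : Matrix k k ℂ) * _) = _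
  rw [hU.1, Matrix.one_mul, Matrix.trace_diagonal]
  rfl

open scoped MatrixOrder in
lemma log_det_tangent {X Y : Matrix k k ℂ} (hX : X.PosDef) (hY : Y.PosDef) :
    Real.log X.det.re ≤ Real.log Y.det.re + (Matrix.trace (Y⁻¹ * X)).re - Fintype.card k := by
  obtain ⟨hXd, hXp⟩ : X.det = (X.det.re : ℂ) ∧ 0 < X.det.re := by
    have h := hX.det_pos; rw [Complex.lt_def] at h
    exact ⟨Complex.ext rfl (by simpa using h.2.symm), by simpa using h.1⟩
  obtain ⟨hYd, hYp⟩ : Y.det = (Y.det.re : ℂ) ∧ 0 < Y.det.re := by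
    have h := hY.det_pos; rw [Complex.lt_def] at h
    exact ⟨Complex.ext rfl (by simpa using h.2.symm), by simpa using h.1⟩
  set R := CFC.sqrt Y⁻¹ with hRdef
  have hRps : R.PosSemidef := Matrix.nonneg_iff_posSemidef.mp (CFC.sqrt_nonneg _)
  have hRR : R * R = Y⁻¹ := CFC.sqrt_mul_sqrt_self _ (Matrix.nonneg_iff_posSemidef.mpr hY.inv.posSemidef)
  set Z := R * X * R with hZdef
  have hZps : Z.PosSemidef := by
    have := hX.posSemidef.conjTranspose_mul_mul_same R
    rwa [hRps.isHermitian.eq] at this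
  have hdetZ : Z.det = (X.det.re / Y.det.re : ℝ) := by
    rw [hZdef, det_mul, det_mul]
    have : R.det * X.det * R.det = R.det * R.det * X.det := by ring
    rw [this, ← det_mul, hRR, det_nonsing_inv, Ring.inverse_eq_inv', hXd, hYd]
    push_cast
    field_simp
    simp only [Complex.ofReal_re]
    field_simp
  have htr : Matrix.trace (Y⁻¹ * X) = Matrix.trace Z := by
    rw [← hRR, Matrix.mul_assoc, Matrix.trace_mul_comm]
  set μ := hZps.isHermitian.eigenvalues with hμdef
  have hμnn : ∀ i, 0 ≤ μ i := hZps.eigenvalues_nonneg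
  have hprod : ∏ i, μ i = X.det.re / Y.det.re := by
    have := hZps.isHermitian.det_eq_prod_eigenvalues
    rw [hdetZ] at this
    have h2 : ((∏ i, μ i : ℝ) : ℂ) = ((X.det.re / Y.det.re : ℝ) : ℂ) := by
      rw [Complex.ofReal_prod]; exact this.symm
    exact_mod_cast h2
  have hq : 0 < X.det.re / Y.det.re := div_pos hXp hYp
  have hμpos : ∀ i, 0 < μ i := by
    intro i
    rcases lt_or_eq_of_le (hμnn i) with h | h
    · exact h
    · exfalso
      have : ∏ j, μ j = 0 := Finset.prod_eq_zero (Finset.mem_univ i) h.symm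
      rw [hprod] at this; linarith
  have hsum : (Matrix.trace Z).re = ∑ i, μ i := by
    rw [trace_eq_sum_eig hZps.isHermitian]
    rw [← Complex.ofReal_sum]
    simp
    rfl
  have hlog : Real.log (X.det.re) - Real.log (Y.det.re) = ∑ i, Real.log (μ i) := by
    rw [← Real.log_div hXp.ne' hYp.ne', ← hprod, Real.log_prod]
    intro i _; exact (hμpos i).ne'
  have hbound : ∑ i, Real.log (μ i) ≤ ∑ i, (μ i - 1) := by
    refine Finset.sum_le_sum fun i _ => ?_
    exact Real.log_le_sub_one_of_pos (hμpos i)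
  have : ∑ i, (μ i - 1) = (∑ i, μ i) - Fintype.card k := by
    rw [Finset.sum_sub_distrib]
    simp [Finset.card_univ]
  rw [htr, hsum]
  linarith [hbound, hlog, this]

lemma re_trace_nonneg {A : Matrix k k ℂ} (hA : A.PosSemidef) : 0 ≤ A.trace.re := by
  rw [trace_eq_sum_eig hA.isHermitian]
  rw [Complex.re_sum]
  refine Finset.sum_nonneg fun i _ => ?_
  simpa using hA.eigenvalues_nonneg i

open scoped MatrixOrder in
lemma re_trace_mul_nonneg {A B : Matrix k k ℂ} (hA : A.PosSemidef) (hB : B.PosSemidef) :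
    0 ≤ (Matrix.trace (A * B)).re := by
  have h : A * B = A * (CFC.sqrt B * CFC.sqrt B) := by
    rw [CFC.sqrt_mul_sqrt_self B (Matrix.nonneg_iff_posSemidef.mpr hB)]
  have h2 : Matrix.trace (A * B) = Matrix.trace (CFC.sqrt B * A * CFC.sqrt B) := by
    rw [h, ← Matrix.mul_assoc, Matrix.trace_mul_comm, ← Matrix.mul_assoc]
  rw [h2]
  refine re_trace_nonneg ?_
  have := hA.conjTranspose_mul_mul_same (CFC.sqrt B)
  rwa [(Matrix.nonneg_iff_posSemidef.mp (CFC.sqrt_nonneg B)).isHermitian.eq] at this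


lemma posdef_det_re {A : Matrix k k ℂ} (hA : A.PosDef) :
    A.det = (A.det.re : ℂ) ∧ 0 < A.det.re := by
  have h := hA.det_pos
  rw [Complex.lt_def] at h
  exact ⟨Complex.ext rfl (by simpa using h.2.symm), by simpa using h.1⟩

theorem stmt_8 (m n : ℕ) (Γ Γb : Matrix (Fin m) (Fin n) ℂ)
    (Ω Ωb : Matrix (Fin m) (Fin m) ℂ) (hΩ : Ω.PosDef) (hΩb : Ωb.PosDef) :
    Real.log ((Matrix.det (1 + Ωb⁻¹ * Γb * Γbᴴ)).re) -
      (Matrix.trace (Ωb⁻¹ * Γb * Γbᴴ)).re +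
      2 * (Matrix.trace (Ωb⁻¹ * Γb * Γᴴ)).re -
      (Matrix.trace ((Ωb⁻¹ - (Γb * Γbᴴ + Ωb)⁻¹)ᴴ * (Γ * Γᴴ + Ω))).re ≤
    Real.log ((Matrix.det (1 + Ω⁻¹ * Γ * Γᴴ)).re) := by
  set S := Γ * Γᴴ + Ω with hSdef
  set Sb := Γb * Γbᴴ + Ωb with hSbdef
  have hS : S.PosDef := Matrix.PosDef.posSemidef_add (posSemidef_self_mul_conjTranspose Γ) hΩ
  have hSb : Sb.PosDef := Matrix.PosDef.posSemidef_add (posSemidef_self_mul_conjTranspose Γb) hΩb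
  have hdΩ : IsUnit Ω.det := isUnit_iff_ne_zero.mpr hΩ.det_pos.ne'
  have hdΩb : IsUnit Ωb.det := isUnit_iff_ne_zero.mpr hΩb.det_pos.ne'
  have hdS : IsUnit S.det := isUnit_iff_ne_zero.mpr hS.det_pos.ne'
  have hdSb : IsUnit Sb.det := isUnit_iff_ne_zero.mpr hSb.det_pos.ne'
  set P := 1 + Γᴴ * Ω⁻¹ * Γ with hPdef
  set Q := 1 + Γbᴴ * Ωb⁻¹ * Γb with hQdef
  have hP : P.PosDef := Matrix.PosDef.add_posSemidef Matrix.PosDef.one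
    (hΩ.inv.posSemidef.conjTranspose_mul_mul_same Γ)
  have hQ : Q.PosDef := Matrix.PosDef.add_posSemidef Matrix.PosDef.one
    (hΩb.inv.posSemidef.conjTranspose_mul_mul_same Γb)
  have hdP : IsUnit P.det := isUnit_iff_ne_zero.mpr hP.det_pos.ne'
  have hdQ : IsUnit Q.det := isUnit_iff_ne_zero.mpr hQ.det_pos.ne'
  -- determinant identifications
  have hdet1 : Matrix.det (1 + Ω⁻¹ * Γ * Γᴴ) = P.det := by
    rw [det_one_add_mul_comm (Ω⁻¹ * Γ) Γᴴ, hPdef, Matrix.mul_assoc]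
  have hdet2 : Matrix.det (1 + Ωb⁻¹ * Γb * Γbᴴ) = Q.det := by
    rw [det_one_add_mul_comm (Ωb⁻¹ * Γb) Γbᴴ, hQdef, Matrix.mul_assoc]
  -- P⁻¹ = E
  set E := 1 - Γᴴ * S⁻¹ * Γ with hEdef
  have key1 : P * Γᴴ = Γᴴ * Ω⁻¹ * S := by
    rw [hPdef, hSdef]
    have h : Ω⁻¹ * Ω = 1 := nonsing_inv_mul _ hdΩ
    simp only [Matrix.add_mul, Matrix.mul_add, Matrix.one_mul, Matrix.mul_assoc, h,
      Matrix.mul_one]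
    abel
  have hPE : P * E = 1 := by
    have h2 : P * (Γᴴ * S⁻¹ * Γ) = Γᴴ * Ω⁻¹ * Γ := by
      calc P * (Γᴴ * S⁻¹ * Γ) = (P * Γᴴ) * (S⁻¹ * Γ) := by
            rw [Matrix.mul_assoc, Matrix.mul_assoc]
        _ = Γᴴ * Ω⁻¹ * (S * (S⁻¹ * Γ)) := by rw [key1, Matrix.mul_assoc]
        _ = Γᴴ * Ω⁻¹ * Γ := by rw [mul_nonsing_inv_cancel_left _ _ hdS]
    rw [hEdef, Matrix.mul_sub, Matrix.mul_one, h2, hPdef]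
    abel
  have hPinvE : P⁻¹ = E := inv_eq_right_inv hPE
  -- the MMSE matrices
  set Wt := Γbᴴ * Sb⁻¹ with hWtdef
  set C := Wt - Γᴴ * S⁻¹ with hCdef
  set M := 1 - Wt * Γ - Γᴴ * Wtᴴ + Wt * S * Wtᴴ with hMdef
  have hSinvH : S⁻¹ᴴ = S⁻¹ := hS.isHermitian.inv
  have hSbinvH : Sb⁻¹ᴴ = Sb⁻¹ := hSb.isHermitian.inv
  have hΩbinvH : Ωb⁻¹ᴴ = Ωb⁻¹ := hΩb.isHermitian.inv
  have hCH : Cᴴ = Sb⁻¹ * Γb - S⁻¹ * Γ := by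
    simp only [hCdef, conjTranspose_sub, hWtdef, conjTranspose_mul,
      conjTranspose_conjTranspose, hSinvH, hSbinvH]
  have hME : M = E + C * S * Cᴴ := by
    rw [hMdef, hEdef, hCH, hCdef]
    have hc1 : ∀ (X : Matrix (Fin m) (Fin n) ℂ), S * (S⁻¹ * X) = X :=
      fun X => mul_nonsing_inv_cancel_left _ _ hdS
    simp only [Matrix.sub_mul, Matrix.mul_sub, Matrix.mul_assoc, hc1,
      nonsing_inv_mul_cancel_left _ _ hdS]
    have hWtH : Wtᴴ = Sb⁻¹ * Γb := by
      rw [hWtdef, conjTranspose_mul, conjTranspose_conjTranspose, hSbinvH]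
    rw [hWtH]
    abel
  -- key identity for Q
  have key1b : Q * Γbᴴ = Γbᴴ * Ωb⁻¹ * Sb := by
    rw [hQdef, hSbdef]
    have h : Ωb⁻¹ * Ωb = 1 := nonsing_inv_mul _ hdΩb
    simp only [Matrix.add_mul, Matrix.mul_add, Matrix.one_mul, Matrix.mul_assoc, h,
      Matrix.mul_one]
    abel
  have hQW : Q * Wt = Γbᴴ * Ωb⁻¹ := by
    rw [hWtdef, ← Matrix.mul_assoc, key1b, Matrix.mul_assoc,
      mul_nonsing_inv _ hdSb, Matrix.mul_one]
  -- conjTranspose facts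
  have hWtH : Wtᴴ = Sb⁻¹ * Γb := by
    simp only [hWtdef, conjTranspose_mul, conjTranspose_conjTranspose, hSbinvH]
  have hconj : (Ωb⁻¹ - Sb⁻¹)ᴴ = Ωb⁻¹ - Sb⁻¹ := by
    rw [conjTranspose_sub, hΩbinvH, hSbinvH]
  -- trace computations
  have t0 : Matrix.trace Q = (n : ℂ) + Matrix.trace (Ωb⁻¹ * Γb * Γbᴴ) := by
    rw [hQdef, trace_add, Matrix.trace_one, trace_mul_cycle Ωb⁻¹ Γb Γbᴴ]
    simp
  have ht0 : (Matrix.trace Q).re = (n : ℝ) + (Matrix.trace (Ωb⁻¹ * Γb * Γbᴴ)).re := by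
    rw [t0]; simp
  have t1 : Matrix.trace (Q * (Wt * Γ)) = Matrix.trace (Ωb⁻¹ * Γ * Γbᴴ) := by
    rw [← Matrix.mul_assoc, hQW, trace_mul_cycle Ωb⁻¹ Γ Γbᴴ]
  have hstar : Matrix.trace (Ωb⁻¹ * Γ * Γbᴴ) = star (Matrix.trace (Ωb⁻¹ * Γb * Γᴴ)) := by
    calc Matrix.trace (Ωb⁻¹ * Γ * Γbᴴ) = Matrix.trace (Γ * Γbᴴ * Ωb⁻¹) :=
          (trace_mul_cycle Γ Γbᴴ Ωb⁻¹).symm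
      _ = Matrix.trace ((Ωb⁻¹ * Γb * Γᴴ)ᴴ) := by
          congr 1
          simp only [conjTranspose_mul, conjTranspose_conjTranspose, hΩbinvH,
            Matrix.mul_assoc]
      _ = star (Matrix.trace (Ωb⁻¹ * Γb * Γᴴ)) := trace_conjTranspose _
  have ht1 : (Matrix.trace (Q * (Wt * Γ))).re = (Matrix.trace (Ωb⁻¹ * Γb * Γᴴ)).re := by
    rw [t1, hstar]; exact Complex.conj_re _
  have t2 : Matrix.trace (Q * (Γᴴ * Wtᴴ)) = star (Matrix.trace (Q * (Wt * Γ))) := by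
    have e : (Q * (Wt * Γ))ᴴ = (Γᴴ * Wtᴴ) * Q := by
      simp only [conjTranspose_mul, hQ.isHermitian.eq, Matrix.mul_assoc]
    rw [trace_mul_comm, ← e, trace_conjTranspose]
  have ht2 : (Matrix.trace (Q * (Γᴴ * Wtᴴ))).re = (Matrix.trace (Ωb⁻¹ * Γb * Γᴴ)).re := by
    rw [t2]
    have : (star (Matrix.trace (Q * (Wt * Γ)))).re = (Matrix.trace (Q * (Wt * Γ))).re :=
      Complex.conj_re _
    rw [this, ht1]
  have hWG : Wtᴴ * Γbᴴ = 1 - Sb⁻¹ * Ωb := by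
    rw [hWtH, Matrix.mul_assoc]
    have e : Γb * Γbᴴ = Sb - Ωb := by rw [hSbdef, add_sub_cancel_right]
    rw [e, Matrix.mul_sub, nonsing_inv_mul _ hdSb]
  have hkey3 : Wtᴴ * (Γbᴴ * Ωb⁻¹) = Ωb⁻¹ - Sb⁻¹ := by
    rw [← Matrix.mul_assoc, hWG, Matrix.sub_mul, Matrix.one_mul, Matrix.mul_assoc,
      mul_nonsing_inv _ hdΩb, Matrix.mul_one]
  have t3 : Matrix.trace (Q * (Wt * S * Wtᴴ)) = Matrix.trace ((Ωb⁻¹ - Sb⁻¹) * S) := by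
    have e1 : Q * (Wt * S * Wtᴴ) = (Γbᴴ * Ωb⁻¹) * S * Wtᴴ := by
      simp only [← Matrix.mul_assoc]
      rw [hQW]
    rw [e1, trace_mul_comm, ← Matrix.mul_assoc, hkey3]
  have ht3 : (Matrix.trace (Q * (Wt * S * Wtᴴ))).re =
      (Matrix.trace ((Ωb⁻¹ - Sb⁻¹) * S)).re := congrArg Complex.re t3
  have hQM : Matrix.trace (Q * M) = Matrix.trace Q - Matrix.trace (Q * (Wt * Γ)) -
      Matrix.trace (Q * (Γᴴ * Wtᴴ)) + Matrix.trace (Q * (Wt * S * Wtᴴ)) := by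
    rw [hMdef]
    simp only [Matrix.mul_sub, Matrix.mul_add, Matrix.mul_one, trace_add, trace_sub]
  have hQMre : (Matrix.trace (Q * M)).re = ((n : ℝ) + (Matrix.trace (Ωb⁻¹ * Γb * Γbᴴ)).re)
      - (Matrix.trace (Ωb⁻¹ * Γb * Γᴴ)).re - (Matrix.trace (Ωb⁻¹ * Γb * Γᴴ)).re
      + (Matrix.trace ((Ωb⁻¹ - Sb⁻¹) * S)).re := by
    rw [hQM]
    simp only [Complex.sub_re, Complex.add_re]
    rw [ht0, ht1, ht2, ht3]
  -- PSD trace inequality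
  have hCS : (C * S * Cᴴ).PosSemidef := hS.posSemidef.mul_mul_conjTranspose_same C
  have hEM : (Matrix.trace (Q * E)).re ≤ (Matrix.trace (Q * M)).re := by
    rw [hME, Matrix.mul_add, trace_add, Complex.add_re]
    have := re_trace_mul_nonneg hQ.posSemidef hCS
    linarith
  -- log-det tangent inequality
  obtain ⟨hPd, hPp⟩ := posdef_det_re hP
  obtain ⟨hQd, hQp⟩ := posdef_det_re hQ
  have hPinvdet : (P⁻¹).det.re = (P.det.re)⁻¹ := by
    rw [det_nonsing_inv, Ring.inverse_eq_inv', hPd, ← Complex.ofReal_inv, Complex.ofReal_re]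
    simp
  have hQinvdet : (Q⁻¹).det.re = (Q.det.re)⁻¹ := by
    rw [det_nonsing_inv, Ring.inverse_eq_inv', hQd, ← Complex.ofReal_inv, Complex.ofReal_re]
    simp
  have main := log_det_tangent hP.inv hQ.inv
  rw [nonsing_inv_nonsing_inv _ hdQ, hPinvdet, hQinvdet, Real.log_inv, Real.log_inv,
    Fintype.card_fin, hPinvE] at main
  -- assemble
  rw [hdet1, hdet2, hconj]
  linarith [main, hEM, hQMre]
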